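/- (Lemma 3.) Let Q = Qᵀ ∈ ℝ^{n×n} be positive definite and τ > 0. If the 4×4 block matrix [[−Q, 0, 𝒦ᵀ, (𝒜_c + ℱ D ℋ)ᵀ], [0, −τQ, 0, Dᵀ], [𝒦, 0, −(1/τ)I, 0], [𝒜_c + ℱ D ℋ, D, 0, −Q⁻¹]] is negative definite, then 𝒩_D(x) ≺ 0 for all x ∈ ℰ_Q := {x ∈ ℝⁿ : xᵀ Q x ≤ 1}. -/

import Mathlib

open Matrix

/-- The 4×4 block matrix, with blocks of sizes `[n, n, 1, n]`,
`[[−Q, 0, 𝒦ᵀ, (𝒜c + ℱDℋ)ᵀ], [0, −τQ, 0, Dᵀ], [𝒦, 0, −(1/τ)I, 0],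
[𝒜c + ℱDℋ, D, 0, −Q⁻¹]]`. -/
noncomputable def blockMat4 {n : ℕ}
    (Q D Ac F H : Matrix (Fin n) (Fin n) ℝ) (K : Matrix (Fin 1) (Fin n) ℝ)
    (τ : ℝ) :
    Matrix ((Fin n ⊕ Fin n) ⊕ (Fin 1 ⊕ Fin n)) ((Fin n ⊕ Fin n) ⊕ (Fin 1 ⊕ Fin n)) ℝ :=
  Matrix.fromBlocks
    (Matrix.fromBlocks (-Q) 0 0 (-(τ • Q)))
    (Matrix.fromBlocks Kᵀ (Ac + F * D * H)ᵀ 0 Dᵀ)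
    (Matrix.fromBlocks K 0 (Ac + F * D * H) D)
    (Matrix.fromBlocks (-((1 / τ) • (1 : Matrix (Fin 1) (Fin 1) ℝ))) 0 0 (-Q⁻¹))

/-- Lemma 3: if the 4×4 block matrix is negative definite, then
`𝒩_D(x) ≺ 0` for all `x` in the ellipsoid `ℰ_Q = {x : xᵀ Q x ≤ 1}`. -/
theorem negdef_on_ellipsoid {n : ℕ} (hn : 0 < n)
    (Q : Matrix (Fin n) (Fin n) ℝ) (hQsym : Q = Qᵀ) (hQpd : Q.PosDef)
    (τ : ℝ) (hτ : 0 < τ)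
    (D Ac : Matrix (Fin n) (Fin n) ℝ)
    (F : Matrix (Fin n) (Fin n) ℝ) (hF : F = 1)
    (H : Matrix (Fin n) (Fin n) ℝ)
    (K : Matrix (Fin 1) (Fin n) ℝ)
    (N : Matrix (Fin n) (Fin 1) ℝ → Matrix (Fin n) (Fin n) ℝ)
    (hN : ∀ x : Matrix (Fin n) (Fin 1) ℝ,
      N x = (Ac + F * D * H)ᵀ * Q * (Ac + F * D * H) - Q
        + (Ac + F * D * H)ᵀ * Q * (D * x * K)
        + Kᵀ * xᵀ * Dᵀ * Q * (Ac + F * D * H)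
        + Kᵀ * xᵀ * Dᵀ * Q * (D * x * K))
    (hblock : (-(blockMat4 Q D Ac F H K τ)).PosDef) :
    ∀ x : Matrix (Fin n) (Fin 1) ℝ, (xᵀ * Q * x) 0 0 ≤ 1 →
      (-(N x)).PosDef := by
  intro x hx
  have hQinv : Q⁻¹ * Q = 1 :=
    nonsing_inv_mul Q ((Matrix.isUnit_iff_isUnit_det Q).1 hQpd.isUnit)
  set A : Matrix (Fin n) (Fin n) ℝ := Ac + F * D * H with hA
  set P : Matrix (Fin n) (Fin n) ℝ := A + D * x * K with hP
  have hNx : N x = Pᵀ * Q * P - Q := by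
    rw [hN, hP, hA]
    simp only [Matrix.transpose_add, Matrix.transpose_mul, Matrix.add_mul,
      Matrix.mul_add, Matrix.mul_assoc, sub_eq_add_neg]
    abel
  rw [Matrix.posDef_iff_dotProduct_mulVec]
  constructor
  · -- Hermitian
    have hsym : (Pᵀ * Q * P - Q)ᵀ = Pᵀ * Q * P - Q := by
      rw [Matrix.transpose_sub, Matrix.transpose_mul, Matrix.transpose_mul,
        Matrix.transpose_transpose, ← hQsym, Matrix.mul_assoc]
    show (-(N x))ᴴ = -(N x)
    rw [hNx, Matrix.conjTranspose_eq_transpose_of_trivial, Matrix.transpose_neg, hsym]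
  · intro z hz
    set kv : Fin 1 → ℝ := K *ᵥ z with hkv
    set k : ℝ := kv 0 with hk
    set xv : Fin n → ℝ := fun i => x i 0 with hxv
    set b : Fin n → ℝ := k • xv with hb
    set w : Fin n → ℝ := P *ᵥ z with hw
    set d : Fin n → ℝ := Q *ᵥ w with hd
    set c : Fin 1 → ℝ := τ • kv with hc
    set v : ((Fin n ⊕ Fin n) ⊕ (Fin 1 ⊕ Fin n)) → ℝ :=
      Sum.elim (Sum.elim z b) (Sum.elim c d) with hv
    have hvne : v ≠ 0 := by
      intro h
      apply hz
      ext i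
      have := congrFun h (Sum.inl (Sum.inl i))
      simpa [hv] using this
    have hpos := (Matrix.posDef_iff_dotProduct_mulVec.mp hblock).2 hvne
    set α : ℝ := z ⬝ᵥ (Q *ᵥ z) with hα
    set β : ℝ := xv ⬝ᵥ (Q *ᵥ xv) with hβ
    set γ : ℝ := w ⬝ᵥ d with hγ
    -- b is the image of the Fin-1 vector kv under x
    have hbx : x *ᵥ kv = b := by
      ext i
      simp [Matrix.mulVec, dotProduct, Fin.sum_univ_one, hb, hxv, mul_comm, hk]
    have hwsplit : w = A *ᵥ z + D *ᵥ b := by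
      rw [hw, hP, Matrix.add_mulVec, ← Matrix.mulVec_mulVec, ← Matrix.mulVec_mulVec, ← hkv, hbx]
    -- compute the big quadratic form
    have hT : v ⬝ᵥ (blockMat4 Q D Ac F H K τ *ᵥ v) = (γ - α) + τ * k ^ 2 * (1 - β) := by
      have h1 : z ⬝ᵥ (Kᵀ *ᵥ c) = k * (τ * k) := by
        rw [Matrix.dotProduct_mulVec, Matrix.vecMul_transpose, ← hkv]
        simp [dotProduct, Fin.sum_univ_one, hc, hk]
      have h2 : z ⬝ᵥ (Aᵀ *ᵥ d) = (A *ᵥ z) ⬝ᵥ d := by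
        rw [Matrix.dotProduct_mulVec, Matrix.vecMul_transpose]
      have h3 : b ⬝ᵥ (Dᵀ *ᵥ d) = (D *ᵥ b) ⬝ᵥ d := by
        rw [Matrix.dotProduct_mulVec, Matrix.vecMul_transpose]
      have h4 : b ⬝ᵥ ((τ • Q) *ᵥ b) = τ * (k * k * β) := by
        rw [hb, Matrix.smul_mulVec, Matrix.mulVec_smul]
        simp [hβ, smul_dotProduct, dotProduct_smul, smul_smul]
        ring
      have h5 : c ⬝ᵥ (K *ᵥ z) = τ * k * k := by
        simp [hc, ← hkv, dotProduct, Fin.sum_univ_one, hk]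
      have h6 : c ⬝ᵥ (((1 / τ) • (1 : Matrix (Fin 1) (Fin 1) ℝ)) *ᵥ c) = (1 / τ) * ((τ * k) * (τ * k)) := by
        rw [Matrix.smul_mulVec, Matrix.one_mulVec]
        simp [hc, dotProduct, Fin.sum_univ_one, hk]
        ring
      have h7 : d ⬝ᵥ (Q⁻¹ *ᵥ d) = w ⬝ᵥ d := by
        have hqd : Q⁻¹ *ᵥ d = w := by
          rw [hd, Matrix.mulVec_mulVec, hQinv, Matrix.one_mulVec]
        rw [hqd, dotProduct_comm]
      rw [hv, blockMat4, Matrix.fromBlocks_mulVec]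
      simp only [Sum.elim_comp_inl, Sum.elim_comp_inr, Matrix.fromBlocks_mulVec,
        sumElim_dotProduct_sumElim, Matrix.neg_mulVec, Matrix.zero_mulVec,
        dotProduct_add, dotProduct_neg, add_zero, zero_add, neg_zero, dotProduct_zero,
        ← hA]
      rw [h1, h2, h3, h4, h5, h6, h7]
      have h8 : d ⬝ᵥ (A *ᵥ z) = (A *ᵥ z) ⬝ᵥ d := dotProduct_comm _ _
      have h9 : d ⬝ᵥ (D *ᵥ b) = (D *ᵥ b) ⬝ᵥ d := dotProduct_comm _ _
      rw [h8, h9]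
      have h10 : (A *ᵥ z) ⬝ᵥ d + (D *ᵥ b) ⬝ᵥ d = γ := by
        rw [hγ, hwsplit, add_dotProduct]
      have hτ' : τ ≠ 0 := ne_of_gt hτ
      field_simp
      nlinarith [h10, hτ.le]
    -- the quadratic form of N x
    have hQF : z ⬝ᵥ (N x *ᵥ z) = γ - α := by
      rw [hNx, Matrix.sub_mulVec, dotProduct_sub, ← hα, Matrix.mul_assoc,
        ← Matrix.mulVec_mulVec, ← Matrix.mulVec_mulVec, ← hw, ← hd,
        Matrix.dotProduct_mulVec, Matrix.vecMul_transpose, ← hw, ← hγ]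
    -- β relates to the ellipsoid condition
    have hβx : β = (xᵀ * Q * x) 0 0 := by
      rw [hβ]
      simp only [dotProduct, Matrix.mulVec, Matrix.mul_apply, Matrix.transpose_apply,
        Finset.mul_sum, Finset.sum_mul, hxv]
      rw [Finset.sum_comm]
      apply Finset.sum_congr rfl
      intro j _
      apply Finset.sum_congr rfl
      intro i _
      ring
    -- conclude
    have hT' : v ⬝ᵥ (blockMat4 Q D Ac F H K τ *ᵥ v) < 0 := by
      rw [Matrix.neg_mulVec, dotProduct_neg, star_trivial] at hpos
      linarith
    have hnonneg : 0 ≤ τ * k ^ 2 * (1 - β) := by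
      have hβ1 : β ≤ 1 := by rw [hβx]; exact hx
      exact mul_nonneg (mul_nonneg hτ.le (sq_nonneg k)) (by linarith)
    rw [hT] at hT'
    rw [star_trivial, Matrix.neg_mulVec, dotProduct_neg, hQF]
    linarith
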